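/- Under the small divisor hypothesis, there exists a constant C' > 0 such that for all integers k, ℓ with ℓ ≠ 0 and ℓ ≠ k: |(k−ℓ)·ℓ / ((k−ℓ)δ₁ + ℓδ₃)| ≤ C' · |ℓ|^{γ₀+2}. -/

import Mathlib

theorem stmt2 (δ₁ δ₃ : ℝ) (hδ₁ : δ₁ ≠ 0) (hδ₃ : δ₃ = 1 + δ₁) (hδ₃' : δ₃ ≠ 0)
    (C₀ γ₀ : ℝ) (hC₀ : 0 < C₀) (hγ₀ : 0 ≤ γ₀)
    (h : ∀ k₁ k₃ : ℤ, k₁ ≠ 0 → k₃ ≠ 0 →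
      (k₁ : ℝ) * δ₁ + (k₃ : ℝ) * δ₃ ≠ 0 ∧
      1 / |(k₁ : ℝ) * δ₁ + (k₃ : ℝ) * δ₃| ≤ C₀ * (min |(k₁ : ℝ)| |(k₃ : ℝ)|) ^ γ₀) :
    ∃ C' > (0 : ℝ), ∀ k ℓ : ℤ, ℓ ≠ 0 → ℓ ≠ k →
      |((k - ℓ : ℤ) : ℝ) * (ℓ : ℝ) / (((k - ℓ : ℤ) : ℝ) * δ₁ + (ℓ : ℝ) * δ₃)| ≤
        C' * |(ℓ : ℝ)| ^ (γ₀ + 2) := by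
  have hδ₁pos : (0:ℝ) < |δ₁| := abs_pos.mpr hδ₁
  refine ⟨max (2 / |δ₁|) (2 * |δ₃| * C₀ / |δ₁|), lt_max_of_lt_left (by positivity), ?_⟩
  intro k ℓ hℓ hℓk
  have hk₁0 : k - ℓ ≠ 0 := sub_ne_zero.mpr (Ne.symm hℓk)
  obtain ⟨hden, hsd⟩ := h (k - ℓ) ℓ hk₁0 hℓ
  set a : ℝ := ((k - ℓ : ℤ) : ℝ) with ha
  set b : ℝ := ((ℓ : ℤ) : ℝ) with hb
  have hdenpos : 0 < |a * δ₁ + b * δ₃| := abs_pos.mpr hden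
  have hb1 : (1:ℝ) ≤ |b| := by
    rw [hb]; rw [← Int.cast_abs]; exact_mod_cast Int.one_le_abs hℓ
  have ha1 : (1:ℝ) ≤ |a| := by
    rw [ha]; rw [← Int.cast_abs]; exact_mod_cast Int.one_le_abs hk₁0
  have hbpos : (0:ℝ) < |b| := lt_of_lt_of_le one_pos hb1
  have hmin : (min |a| |b|) ^ γ₀ ≤ |b| ^ γ₀ :=
    Real.rpow_le_rpow (le_min (lt_of_lt_of_le one_pos ha1).le (le_of_lt hbpos)) (min_le_right _ _) hγ₀
  have hsd' : 1 ≤ C₀ * (min |a| |b|) ^ γ₀ * |a * δ₁ + b * δ₃| := by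
    rw [div_le_iff₀ hdenpos] at hsd
    linarith [hsd]
  have hbexp : |b| ^ (γ₀ + 2) = |b| ^ γ₀ * (|b| * |b|) := by
    rw [Real.rpow_add hbpos, show (2:ℝ) = ((2:ℕ):ℝ) by norm_num, Real.rpow_natCast]
    ring
  have hbγpos : 0 < |b| ^ γ₀ := Real.rpow_pos_of_pos hbpos _
  have hminpos : 0 < (min |a| |b|) ^ γ₀ :=
    Real.rpow_pos_of_pos (lt_min (lt_of_lt_of_le one_pos ha1) hbpos) _
  rw [abs_div, div_le_iff₀ hdenpos, abs_mul]
  rcases le_or_gt (|a| * |δ₁|) (2 * (|b| * |δ₃|)) with hc | hc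
  · -- small a case: use small divisor bound
    have key : |a| * |b| ≤ |a| * |b| * (C₀ * (min |a| |b|) ^ γ₀ * |a * δ₁ + b * δ₃|) := by
      nlinarith [mul_pos (mul_pos (lt_of_lt_of_le one_pos ha1) hbpos) (mul_pos (mul_pos hC₀ hminpos) hdenpos)]
    calc |a| * |b| ≤ |a| * |b| * (C₀ * (min |a| |b|) ^ γ₀ * |a * δ₁ + b * δ₃|) := key
      _ ≤ |a| * |b| * (C₀ * |b| ^ γ₀ * |a * δ₁ + b * δ₃|) := by
          have : C₀ * (min |a| |b|) ^ γ₀ ≤ C₀ * |b| ^ γ₀ :=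
            mul_le_mul_of_nonneg_left hmin hC₀.le
          nlinarith [mul_pos (mul_pos (lt_of_lt_of_le one_pos ha1) hbpos) hdenpos]
      _ ≤ (2 * |δ₃| * C₀ / |δ₁|) * |b| ^ (γ₀ + 2) * |a * δ₁ + b * δ₃| := by
          rw [hbexp]
          rw [div_mul_eq_mul_div, div_mul_eq_mul_div, le_div_iff₀ hδ₁pos]
          nlinarith [mul_le_mul_of_nonneg_right hc
            (by positivity : (0:ℝ) ≤ |b| * (C₀ * |b| ^ γ₀ * |a * δ₁ + b * δ₃|))]
      _ ≤ max (2 / |δ₁|) (2 * |δ₃| * C₀ / |δ₁|) * |b| ^ (γ₀ + 2) * |a * δ₁ + b * δ₃| := by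
          have := le_max_right (2 / |δ₁|) (2 * |δ₃| * C₀ / |δ₁|)
          have hp : 0 ≤ |b| ^ (γ₀ + 2) * |a * δ₁ + b * δ₃| := by positivity
          nlinarith
  · -- large a case: |den| ≥ |a||δ₁|/2
    have hden2 : |a| * |δ₁| / 2 ≤ |a * δ₁ + b * δ₃| := by
      have h2 : |a * δ₁| - |b * δ₃| ≤ |a * δ₁ + b * δ₃| := by
        have h3 := abs_add_le (a * δ₁ + b * δ₃) (-(b * δ₃))
        simp only [add_neg_cancel_right, abs_neg] at h3
        linarith
      rw [abs_mul, abs_mul] at h2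
      nlinarith
    have hble : |b| ≤ |b| ^ (γ₀ + 2) := by
      calc |b| = |b| ^ (1:ℝ) := (Real.rpow_one _).symm
        _ ≤ |b| ^ (γ₀ + 2) := Real.rpow_le_rpow_of_exponent_le hb1 (by linarith)
    calc |a| * |b| = (2 / |δ₁|) * |b| * (|a| * |δ₁| / 2) := by field_simp
      _ ≤ (2 / |δ₁|) * |b| * |a * δ₁ + b * δ₃| :=
          mul_le_mul_of_nonneg_left hden2 (by positivity)
      _ ≤ (2 / |δ₁|) * |b| ^ (γ₀ + 2) * |a * δ₁ + b * δ₃| := by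
          have h4 := mul_le_mul_of_nonneg_left hble (by positivity : (0:ℝ) ≤ 2 / |δ₁|)
          nlinarith [hdenpos.le]
      _ ≤ max (2 / |δ₁|) (2 * |δ₃| * C₀ / |δ₁|) * |b| ^ (γ₀ + 2) * |a * δ₁ + b * δ₃| := by
          have h5 := le_max_left (2 / |δ₁|) (2 * |δ₃| * C₀ / |δ₁|)
          have hp : 0 ≤ |b| ^ (γ₀ + 2) * |a * δ₁ + b * δ₃| := by positivity
          nlinarith
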